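/- Let p ≥ 5 be an odd prime, m = p−1, and b ∈ {1,...,p−1}. Let O be the 2m×m design obtained by stacking the leave-one-out Williams designs Ẽ_b (rows 1,...,m) and Ẽ_{p−b} (rows m+1,...,2m). Then every pair of distinct rows of O has Hamming distance at least m−2, the minimum pairwise Hamming distance of O equals m−2, and exactly m unordered pairs of distinct rows of O have Hamming distance exactly m−2 (namely the pairs consisting of row i of Ẽ_b and row p−i of Ẽ_{p−b} for i = 1,...,m). -/

import Mathlib

/-- The Williams transformation on `{0,…,p-1}`. -/
def Wtr (p x : ℕ) : ℕ :=
  if 2 * x < p then 2 * x else 2 * (p - x) - 1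

/-- The leave-one-out Williams-transformed design `Ẽ_b`. -/
def Etil (p b i j : ℕ) : ℕ :=
  let x := Wtr p ((i * j + b) % p)
  if x < Wtr p b then x + 1 else x

/-- Row `r` (for `1 ≤ r ≤ 2(p-1)`) of the `2m × m` design `O` obtained by stacking
`Ẽ_b` (rows `1,…,m`) on top of `Ẽ_{p-b}` (rows `m+1,…,2m`), with `m = p - 1`. -/
def stackRow (p b r j : ℕ) : ℕ :=
  if r ≤ p - 1 then Etil p b r j else Etil p (p - b) (r - (p - 1)) j

/-- Hamming distance between rows `r` and `r'` of the stacked design. -/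
def stackHam (p b r r' : ℕ) : ℕ :=
  ((Finset.Icc 1 (p - 1)).filter fun j => stackRow p b r j ≠ stackRow p b r' j).card

section Aux
variable {p : ℕ}

lemma Wtr_inj (hp1 : 1 < p) {x y : ℕ} (hx : x < p) (hy : y < p)
    (h : Wtr p x = Wtr p y) : x = y := by
  unfold Wtr at h; split_ifs at h <;> omega

lemma cast_ne_zero (hp1 : 1 < p) {a : ℕ} (ha : a ∈ Finset.Icc 1 (p - 1)) :
    (a : ZMod p) ≠ 0 := by
  haveI : NeZero p := ⟨by omega⟩
  simp only [Finset.mem_Icc] at ha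
  rw [Ne, ZMod.natCast_eq_zero_iff]
  intro h
  exact absurd (Nat.le_of_dvd (by omega) h) (by omega)

lemma Etil_entry (hp1 : 1 < p) (b i j : ℕ) :
    Etil p b i j =
      if Wtr p ((((i * j + b : ℕ)) : ZMod p).val) < Wtr p b
      then Wtr p ((((i * j + b : ℕ)) : ZMod p).val) + 1
      else Wtr p ((((i * j + b : ℕ)) : ZMod p).val) := by
  haveI : NeZero p := ⟨by omega⟩
  simp only [Etil, ZMod.val_natCast]

/-- The argument of an entry is never congruent to `b'` itself. -/
lemma arg_ne (hp : p.Prime) {b' i j : ℕ}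
    (hi : i ∈ Finset.Icc 1 (p - 1)) (hj : j ∈ Finset.Icc 1 (p - 1)) :
    (((i * j + b' : ℕ)) : ZMod p) ≠ (b' : ZMod p) := by
  haveI := Fact.mk hp
  intro h
  have h2 : (i : ZMod p) * j = 0 := by push_cast at h; linear_combination h
  rcases mul_eq_zero.mp h2 with h0 | h0
  · exact cast_ne_zero hp.one_lt hi h0
  · exact cast_ne_zero hp.one_lt hj h0

lemma wtr_arg_ne (hp : p.Prime) {b' i j : ℕ} (hb' : b' < p)
    (hi : i ∈ Finset.Icc 1 (p - 1)) (hj : j ∈ Finset.Icc 1 (p - 1)) :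
    Wtr p ((((i * j + b' : ℕ)) : ZMod p).val) ≠ Wtr p b' := by
  haveI : NeZero p := ⟨hp.pos.ne'⟩
  intro h
  have hv := Wtr_inj hp.one_lt (ZMod.val_lt _) hb' h
  exact arg_ne hp hi hj (by
    conv_lhs => rw [← ZMod.natCast_rightInverse (((i * j + b' : ℕ)) : ZMod p)]
    rw [hv])

/-- Within one block, distinct rows differ everywhere. -/
lemma within_ne (hp : p.Prime) {b' i k j : ℕ} (hb' : b' ∈ Finset.Icc 1 (p - 1))
    (hi : i ∈ Finset.Icc 1 (p - 1)) (hk : k ∈ Finset.Icc 1 (p - 1))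
    (hj : j ∈ Finset.Icc 1 (p - 1)) (hik : i ≠ k) :
    Etil p b' i j ≠ Etil p b' k j := by
  haveI := Fact.mk hp
  haveI : NeZero p := ⟨hp.pos.ne'⟩
  have hp1 := hp.one_lt
  have hb'lt : b' < p := by simp only [Finset.mem_Icc] at hb'; omega
  rw [Etil_entry hp1, Etil_entry hp1]
  have hu := wtr_arg_ne hp hb'lt hi hj
  have hv := wtr_arg_ne hp hb'lt hk hj
  have hAA : (((i * j + b' : ℕ)) : ZMod p) ≠ (((k * j + b' : ℕ)) : ZMod p) := by
    intro h
    push_cast at h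
    have : ((i : ZMod p) - k) * j = 0 := by linear_combination h
    rcases mul_eq_zero.mp this with h0 | h0
    · have hik2 : (i : ZMod p) = k := by linear_combination h0
      have hi' : i < p := by simp only [Finset.mem_Icc] at hi; omega
      have hk' : k < p := by simp only [Finset.mem_Icc] at hk; omega
      exact hik (by
        have := congrArg ZMod.val hik2
        rwa [ZMod.val_cast_of_lt hi', ZMod.val_cast_of_lt hk'] at this)
    · exact cast_ne_zero hp1 hj h0
  have huv : Wtr p ((((i * j + b' : ℕ)) : ZMod p).val)
      ≠ Wtr p ((((k * j + b' : ℕ)) : ZMod p).val) := by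
    intro h
    exact hAA (ZMod.val_injective p (Wtr_inj hp1 (ZMod.val_lt _) (ZMod.val_lt _) h))
  split_ifs <;> omega

lemma Wtr_consec (hodd : Odd p) {b : ℕ} (hb : b ∈ Finset.Icc 1 (p - 1)) :
    Wtr p b = Wtr p (p - b) + 1 ∨ Wtr p (p - b) = Wtr p b + 1 := by
  obtain ⟨t, ht⟩ := hodd
  simp only [Finset.mem_Icc] at hb
  unfold Wtr
  split_ifs <;> omega

lemma g_iff {B C u v : ℕ} (hBC : B = C + 1 ∨ C = B + 1) (hu : u ≠ B) (hv : v ≠ C) :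
    ((if u < B then u + 1 else u) = if v < C then v + 1 else v) ↔
      (u = v ∨ (u = C ∧ v = B)) := by
  split_ifs <;> omega

lemma cross_iff (hp : p.Prime) (hodd : Odd p) {b i k j : ℕ}
    (hb : b ∈ Finset.Icc 1 (p - 1)) (hi : i ∈ Finset.Icc 1 (p - 1))
    (hk : k ∈ Finset.Icc 1 (p - 1)) (hj : j ∈ Finset.Icc 1 (p - 1)) :
    Etil p b i j = Etil p (p - b) k j ↔
      ((i : ZMod p) * j + b = (k : ZMod p) * j - b ∨
        ((i : ZMod p) * j = -(2 * b) ∧ (k : ZMod p) * j = 2 * b)) := by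
  haveI := Fact.mk hp
  haveI : NeZero p := ⟨hp.pos.ne'⟩
  have hp1 := hp.one_lt
  have hblt : b < p := by simp only [Finset.mem_Icc] at hb; omega
  have hpblt : p - b < p := by simp only [Finset.mem_Icc] at hb; omega
  rw [Etil_entry hp1, Etil_entry hp1,
    g_iff (Wtr_consec hodd hb) (wtr_arg_ne hp hblt hi hj) (wtr_arg_ne hp hpblt hk hj)]
  have key : ∀ (x : ZMod p) (c : ℕ), c < p → (Wtr p x.val = Wtr p c ↔ x = (c : ZMod p)) := by
    intro x c hc
    constructor
    · intro h
      have hv := Wtr_inj hp1 (ZMod.val_lt _) hc h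
      conv_lhs => rw [← ZMod.natCast_rightInverse x]
      rw [hv]
    · intro h
      rw [h, ZMod.val_cast_of_lt hc]
  have key2 : ∀ x y : ZMod p, Wtr p x.val = Wtr p y.val ↔ x = y := by
    intro x y
    constructor
    · intro h
      exact ZMod.val_injective p (Wtr_inj hp1 (ZMod.val_lt _) (ZMod.val_lt _) h)
    · intro h; rw [h]
  have hA : (((i * j + b : ℕ)) : ZMod p) = (i : ZMod p) * j + b := by push_cast; ring
  have hA' : (((k * j + (p - b) : ℕ)) : ZMod p) = (k : ZMod p) * j - b := by
    push_cast [Nat.cast_sub (show b ≤ p by omega)]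
    simp [ZMod.natCast_self]
    ring
  have hc : (((p - b : ℕ)) : ZMod p) = -(b : ZMod p) := by
    push_cast [Nat.cast_sub (show b ≤ p by omega)]
    simp [ZMod.natCast_self]
  rw [key2, key _ _ hpblt, key _ _ hblt, hA, hA', hc]
  constructor
  · rintro (h | ⟨h1, h2⟩)
    · exact Or.inl h
    · exact Or.inr ⟨by linear_combination h1, by linear_combination h2⟩
  · rintro (h | ⟨h1, h2⟩)
    · exact Or.inl h
    · exact Or.inr ⟨by linear_combination h1, by linear_combination h2⟩

lemma filter_cast_eq (hp : p.Prime) (a : ZMod p) (ha : a ≠ 0) :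
    ((Finset.Icc 1 (p - 1)).filter fun j : ℕ => (j : ZMod p) = a) = {a.val} := by
  haveI : NeZero p := ⟨hp.pos.ne'⟩
  have hp1 := hp.one_lt
  ext j
  simp only [Finset.mem_filter, Finset.mem_Icc, Finset.mem_singleton]
  constructor
  · rintro ⟨⟨h1, h2⟩, he⟩
    rw [← he, ZMod.val_cast_of_lt (by omega)]
  · rintro rfl
    have h0 : a.val ≠ 0 := fun h => ha ((ZMod.val_eq_zero a).mp h)
    have hlt := ZMod.val_lt a
    exact ⟨⟨by omega, by omega⟩, ZMod.natCast_rightInverse a⟩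

lemma stackHam_full {b r r' : ℕ}
    (h : ∀ j ∈ Finset.Icc 1 (p - 1), stackRow p b r j ≠ stackRow p b r' j) :
    stackHam p b r r' = p - 1 := by
  unfold stackHam
  rw [Finset.filter_true_of_mem h, Nat.card_Icc]
  omega

lemma stackHam_eq_sub (b r r' : ℕ) :
    stackHam p b r r' = (p - 1) -
      ((Finset.Icc 1 (p - 1)).filter fun j => stackRow p b r j = stackRow p b r' j).card := by
  unfold stackHam
  rw [Finset.filter_not, Finset.card_sdiff_of_subset (Finset.filter_subset _ _), Nat.card_Icc]
  omega

lemma stackHam_cross (hp : p.Prime) (hodd : Odd p) (hp5 : 5 ≤ p) {b i k : ℕ}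
    (hb : b ∈ Finset.Icc 1 (p - 1)) (hi : i ∈ Finset.Icc 1 (p - 1))
    (hk : k ∈ Finset.Icc 1 (p - 1)) :
    stackHam p b i ((p - 1) + k) =
      if k = p - i then (p - 1) - 2 else if k = i then p - 1 else (p - 1) - 1 := by
  haveI := Fact.mk hp
  haveI : NeZero p := ⟨hp.pos.ne'⟩
  have hp1 := hp.one_lt
  have hbm : 1 ≤ b ∧ b ≤ p - 1 := Finset.mem_Icc.mp hb
  have him : 1 ≤ i ∧ i ≤ p - 1 := Finset.mem_Icc.mp hi
  have hkm : 1 ≤ k ∧ k ≤ p - 1 := Finset.mem_Icc.mp hk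
  have h2 : (2 : ZMod p) ≠ 0 := by
    have : ((2 : ℕ) : ZMod p) ≠ 0 :=
      cast_ne_zero hp1 (Finset.mem_Icc.mpr ⟨by omega, by omega⟩)
    simpa using this
  have hb0 : (b : ZMod p) ≠ 0 := cast_ne_zero hp1 hb
  have hi0 : (i : ZMod p) ≠ 0 := cast_ne_zero hp1 hi
  have cancel2 : ∀ x y : ZMod p, 2 * x = 2 * y → x = y := fun x y h =>
    mul_left_cancel₀ h2 h
  have hrow : ∀ j, stackRow p b i j = Etil p b i j := fun j => if_pos him.2
  have hrow' : ∀ j, stackRow p b ((p - 1) + k) j = Etil p (p - b) k j := by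
    intro j
    unfold stackRow
    rw [if_neg (by omega)]
    congr 1
    omega
  have hcond : ∀ j ∈ Finset.Icc 1 (p - 1),
      (stackRow p b i j = stackRow p b ((p - 1) + k) j ↔
        ((i : ZMod p) * j + b = (k : ZMod p) * j - b ∨
          ((i : ZMod p) * j = -(2 * b) ∧ (k : ZMod p) * j = 2 * b))) := by
    intro j hj
    rw [hrow j, hrow' j]
    exact cross_iff hp hodd hb hi hk hj
  rw [stackHam_eq_sub, Finset.filter_congr hcond]
  by_cases hki : k = p - i
  · -- two agreements
    subst hki
    have hkc : (((p - i : ℕ)) : ZMod p) = -(i : ZMod p) := by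
      push_cast [Nat.cast_sub (show i ≤ p by omega)]
      simp [ZMod.natCast_self]
    set a1 : ZMod p := -(b : ZMod p) / i with ha1def
    set a2 : ZMod p := -(2 * (b : ZMod p)) / i with ha2def
    have hcond2 : ∀ j ∈ Finset.Icc 1 (p - 1),
        (((i : ZMod p) * j + b = ((p - i : ℕ) : ZMod p) * j - b ∨
          ((i : ZMod p) * j = -(2 * b) ∧ ((p - i : ℕ) : ZMod p) * j = 2 * b)) ↔
          ((j : ZMod p) = a1 ∨ (j : ZMod p) = a2)) := by
      intro j hj
      rw [hkc]
      constructor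
      · rintro (h | ⟨h1, h2'⟩)
        · left
          rw [ha1def, eq_div_iff hi0]
          exact cancel2 _ _ (by linear_combination h)
        · right
          rw [ha2def, eq_div_iff hi0]
          linear_combination h1
      · rintro (h | h)
        · left
          rw [ha1def, eq_div_iff hi0] at h
          linear_combination 2 * h
        · right
          rw [ha2def, eq_div_iff hi0] at h
          exact ⟨by linear_combination h, by linear_combination -h⟩
    rw [Finset.filter_congr hcond2]
    have ha1 : a1 ≠ 0 := div_ne_zero (neg_ne_zero.mpr hb0) hi0
    have ha2 : a2 ≠ 0 := div_ne_zero (neg_ne_zero.mpr (mul_ne_zero h2 hb0)) hi0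
    have ha12 : a1 ≠ a2 := by
      intro h
      rw [ha1def, ha2def, div_eq_div_iff hi0 hi0] at h
      have e2 : -(b : ZMod p) = -(2 * b) := mul_right_cancel₀ hi0 h
      exact hb0 (by linear_combination e2)
    have hvalne : a1.val ≠ a2.val := fun h => ha12 (ZMod.val_injective p h)
    rw [Finset.filter_or, filter_cast_eq hp a1 ha1, filter_cast_eq hp a2 ha2,
      ← Finset.insert_eq, if_pos rfl, Finset.card_pair hvalne]
  · by_cases hkk : k = i
    · -- no agreements
      subst hkk
      have hcond2 : ∀ j ∈ Finset.Icc 1 (p - 1),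
          (((k : ZMod p) * j + b = (k : ZMod p) * j - b ∨
            ((k : ZMod p) * j = -(2 * b) ∧ (k : ZMod p) * j = 2 * b)) ↔ False) := by
        intro j hj
        simp only [iff_false]
        rintro (h | ⟨h1, h2'⟩)
        · exact hb0 (cancel2 _ _ (by linear_combination h))
        · have h4 : (2 * b : ZMod p) = 0 := cancel2 _ _ (by linear_combination h1 - h2')
          exact hb0 (cancel2 _ _ (by linear_combination h4))
      rw [Finset.filter_congr hcond2, Finset.filter_false, Finset.card_empty,
        if_neg hki, if_pos rfl]
      omega
    · -- exactly one agreement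
      have hik0 : (i : ZMod p) - k ≠ 0 := by
        intro h
        have hkc : (k : ZMod p) = i := by linear_combination -h
        have := congrArg ZMod.val hkc
        rw [ZMod.val_cast_of_lt (show k < p by omega),
          ZMod.val_cast_of_lt (show i < p by omega)] at this
        exact hkk this
      have hsum : (i : ZMod p) + k ≠ 0 := by
        intro h
        have hkc : (k : ZMod p) = ((p - i : ℕ) : ZMod p) := by
          push_cast [Nat.cast_sub (show i ≤ p by omega)]
          simp only [ZMod.natCast_self]
          linear_combination h
        have := congrArg ZMod.val hkc
        rw [ZMod.val_cast_of_lt (show k < p by omega),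
          ZMod.val_cast_of_lt (show p - i < p by omega)] at this
        exact hki this
      set a : ZMod p := -(2 * (b : ZMod p)) / ((i : ZMod p) - k) with hadef
      have ha0 : a ≠ 0 := div_ne_zero (neg_ne_zero.mpr (mul_ne_zero h2 hb0)) hik0
      have hcond2 : ∀ j ∈ Finset.Icc 1 (p - 1),
          (((i : ZMod p) * j + b = (k : ZMod p) * j - b ∨
            ((i : ZMod p) * j = -(2 * b) ∧ (k : ZMod p) * j = 2 * b)) ↔
            (j : ZMod p) = a) := by
        intro j hj
        constructor
        · rintro (h | ⟨h1, h2'⟩)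
          · rw [hadef, eq_div_iff hik0]
            linear_combination h
          · exfalso
            have hj0 : ((i : ZMod p) + k) * j = 0 := by linear_combination h1 + h2'
            rcases mul_eq_zero.mp hj0 with h0 | h0
            · exact hsum h0
            · exact cast_ne_zero hp1 hj h0
        · intro h
          left
          rw [hadef, eq_div_iff hik0] at h
          linear_combination h
      rw [Finset.filter_congr hcond2, filter_cast_eq hp a ha0, Finset.card_singleton,
        if_neg hki, if_neg hkk]

lemma stackHam_comm (b r r' : ℕ) : stackHam p b r r' = stackHam p b r' r := by
  unfold stackHam
  congr 1
  apply Finset.filter_congr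
  intro j _
  exact ne_comm

lemma stackHam_cases (hp : p.Prime) (hodd : Odd p) (hp5 : 5 ≤ p) {b : ℕ}
    (hb : b ∈ Finset.Icc 1 (p - 1)) {r r' : ℕ} (hr : r ∈ Finset.Icc 1 (2 * (p - 1)))
    (hr' : r' ∈ Finset.Icc 1 (2 * (p - 1))) (hlt : r < r') :
    stackHam p b r r' =
      if r ≤ p - 1 ∧ p - 1 < r' ∧ r' - (p - 1) = p - r then (p - 1) - 2
      else if r ≤ p - 1 ∧ p - 1 < r' ∧ r' - (p - 1) ≠ r then (p - 1) - 1
      else p - 1 := by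
  have hp1 := hp.one_lt
  simp only [Finset.mem_Icc] at hr hr'
  have hbm := Finset.mem_Icc.mp hb
  by_cases h1 : r' ≤ p - 1
  · rw [if_neg (by omega), if_neg (by omega)]
    apply stackHam_full
    intro j hj
    unfold stackRow
    rw [if_pos (by omega), if_pos h1]
    exact within_ne hp hb (Finset.mem_Icc.mpr ⟨by omega, by omega⟩)
      (Finset.mem_Icc.mpr ⟨by omega, by omega⟩) hj (by omega)
  · by_cases h2 : r ≤ p - 1
    · have hk : r' - (p - 1) ∈ Finset.Icc 1 (p - 1) := Finset.mem_Icc.mpr ⟨by omega, by omega⟩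
      have hrr : r' = (p - 1) + (r' - (p - 1)) := by omega
      rw [hrr, stackHam_cross hp hodd hp5 hb (Finset.mem_Icc.mpr ⟨by omega, by omega⟩) hk]
      by_cases hc1 : r' - (p - 1) = p - r
      · rw [if_pos hc1, if_pos ⟨h2, by omega, by omega⟩]
      · rw [if_neg hc1]
        by_cases hc2 : r' - (p - 1) = r
        · rw [if_pos hc2, if_neg (by push_neg; intro _ _; omega),
            if_neg (by push_neg; intro _ _; omega)]
        · rw [if_neg hc2, if_neg (by push_neg; intro _ _; omega),
            if_pos ⟨h2, by omega, by omega⟩]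
    · rw [if_neg (by omega), if_neg (by omega)]
      apply stackHam_full
      intro j hj
      unfold stackRow
      rw [if_neg (by omega), if_neg (by omega)]
      exact within_ne hp (Finset.mem_Icc.mpr ⟨by omega, by omega⟩)
        (Finset.mem_Icc.mpr ⟨by omega, by omega⟩)
        (Finset.mem_Icc.mpr ⟨by omega, by omega⟩) hj (by omega)

end Aux

/-- let `p ≥ 5` be an odd prime, `m = p - 1`, `b ∈ {1,…,p-1}`, and let
`O` be the `2m × m` design obtained by stacking `Ẽ_b` and `Ẽ_{p-b}`.  Then every pair
of distinct rows of `O` has Hamming distance at least `m - 2`, the minimum pairwise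
Hamming distance equals `m - 2` (some pair attains it), and the unordered pairs of
distinct rows with Hamming distance exactly `m - 2` are exactly the `m` pairs
consisting of row `i` of `Ẽ_b` and row `p - i` of `Ẽ_{p-b}` (global row `m + p - i`),
`i = 1,…,m`. -/
theorem stmt_19 (p : ℕ) (hp : p.Prime) (hodd : Odd p) (hp5 : 5 ≤ p)
    (b : ℕ) (hb : b ∈ Finset.Icc 1 (p - 1)) :
    (∀ r ∈ Finset.Icc 1 (2 * (p - 1)), ∀ r' ∈ Finset.Icc 1 (2 * (p - 1)), r ≠ r' →
        (p - 1) - 2 ≤ stackHam p b r r') ∧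
    (∃ r ∈ Finset.Icc 1 (2 * (p - 1)), ∃ r' ∈ Finset.Icc 1 (2 * (p - 1)),
        r ≠ r' ∧ stackHam p b r r' = (p - 1) - 2) ∧
    ((Finset.Icc 1 (2 * (p - 1)) ×ˢ Finset.Icc 1 (2 * (p - 1))).filter
        (fun q => q.1 < q.2 ∧ stackHam p b q.1 q.2 = (p - 1) - 2)
      = (Finset.Icc 1 (p - 1)).image fun i => (i, (p - 1) + (p - i))) := by
  have hbound : ∀ r ∈ Finset.Icc 1 (2 * (p - 1)), ∀ r' ∈ Finset.Icc 1 (2 * (p - 1)),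
      r < r' → (p - 1) - 2 ≤ stackHam p b r r' := by
    intro r hr r' hr' hlt
    rw [stackHam_cases hp hodd hp5 hb hr hr' hlt]
    split_ifs <;> omega
  refine ⟨?_, ?_, ?_⟩
  · intro r hr r' hr' hne
    rcases lt_or_gt_of_ne hne with h | h
    · exact hbound r hr r' hr' h
    · rw [stackHam_comm]
      exact hbound r' hr' r hr h
  · refine ⟨1, Finset.mem_Icc.mpr ⟨le_rfl, by omega⟩, 2 * (p - 1),
      Finset.mem_Icc.mpr ⟨by omega, le_rfl⟩, by omega, ?_⟩
    rw [stackHam_cases hp hodd hp5 hb (Finset.mem_Icc.mpr ⟨le_rfl, by omega⟩)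
      (Finset.mem_Icc.mpr ⟨by omega, le_rfl⟩) (by omega)]
    rw [if_pos ⟨by omega, by omega, by omega⟩]
  · ext ⟨r, r'⟩
    simp only [Finset.mem_filter, Finset.mem_product, Finset.mem_Icc, Finset.mem_image,
      Prod.mk.injEq]
    constructor
    · rintro ⟨⟨⟨hr1, hr2⟩, hr1', hr2'⟩, hlt, hham⟩
      rw [stackHam_cases hp hodd hp5 hb (Finset.mem_Icc.mpr ⟨hr1, hr2⟩)
        (Finset.mem_Icc.mpr ⟨hr1', hr2'⟩) hlt] at hham
      split_ifs at hham with hcase1 hcase2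
      · exact ⟨r, ⟨hr1, hcase1.1⟩, rfl, by omega⟩
      · omega
      · omega
    · rintro ⟨i, ⟨hi1, hi2⟩, rfl, rfl⟩
      refine ⟨⟨⟨hi1, by omega⟩, by omega, by omega⟩, by omega, ?_⟩
      rw [stackHam_cases hp hodd hp5 hb (Finset.mem_Icc.mpr ⟨hi1, by omega⟩)
        (Finset.mem_Icc.mpr ⟨by omega, by omega⟩) (by omega)]
      rw [if_pos ⟨by omega, by omega, by omega⟩]
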